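/- Suppose S=(s_i) is a de Bruijn sequence of order n > 1. Then D^{-1}(S) consists of a disjoint pair of complementary primitive (n+1)-window sequences, each of period 2^n. -/

import Mathlib

/-- A sequence has `m` as a (not necessarily least) period. -/
def hasPer (s : ℕ → Bool) (m : ℕ) : Prop := ∀ i, s (i + m) = s i

/-- `m` is the (least positive) period of `s`. -/
def isPeriod (s : ℕ → Bool) (m : ℕ) : Prop :=
  0 < m ∧ hasPer s m ∧ ∀ k, 0 < k → hasPer s k → m ≤ k

/-- The `n`-tuple appearing at position `i` of `s`. -/
def tup (s : ℕ → Bool) (n i : ℕ) : Fin n → Bool := fun k => s (i + (k : ℕ))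

/-- The reverse of an `n`-tuple. -/
def tupRev {n : ℕ} (u : Fin n → Bool) : Fin n → Bool := fun k => u k.rev

/-- An `n`-window sequence of period `m`. -/
def isNWindow (s : ℕ → Bool) (n m : ℕ) : Prop :=
  isPeriod s m ∧ ∀ i j, tup s n i = tup s n j → i ≡ j [MOD m]

/-- The weight of (one period of) `s`. -/
def wt (s : ℕ → Bool) (m : ℕ) : ℕ := ∑ i ∈ Finset.range m, (if s i then 1 else 0)

/-- The complement of a sequence. -/
def seqCompl (s : ℕ → Bool) : ℕ → Bool := fun i => !(s i)

/-- Two sequences are disjoint if they share no `n`-tuple. -/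
def disjointSeq (s t : ℕ → Bool) (n : ℕ) : Prop := ∀ i j, tup s n i ≠ tup t n j

/-- A sequence is primitive if it is disjoint from its complement. -/
def primitiveSeq (s : ℕ → Bool) (n : ℕ) : Prop := disjointSeq s (seqCompl s) n

/-- An orientable sequence of order `n` and period `m`. -/
def isOrientable (s : ℕ → Bool) (n m : ℕ) : Prop :=
  isNWindow s n m ∧ ∀ i j, tup s n i ≠ tupRev (tup s n j)

/-- Two sequences are o-disjoint: disjoint, and no `n`-tuple of one is the
reverse of an `n`-tuple of the other. -/
def oDisjoint (s t : ℕ → Bool) (n : ℕ) : Prop :=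
  disjointSeq s t n ∧ ∀ i j, tup s n i ≠ tupRev (tup t n j)

/-- The Lempel homomorphism `D` on periodic sequences. -/
def Dmap (t : ℕ → Bool) : ℕ → Bool := fun i => xor (t i) (t (i + 1))

/-- The set `D⁻¹(s)` of sequences mapping to `s` under `D`. -/
def Dinv (s : ℕ → Bool) : Set (ℕ → Bool) := { t | Dmap t = s }

/-- The canonical element of `D⁻¹(s)` starting at `false`. -/
def lemT (s : ℕ → Bool) : ℕ → Bool
  | 0 => false
  | i + 1 => xor (lemT s i) (s i)

lemma lemT_sum (s : ℕ → Bool) (k : ℕ) :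
    (if lemT s k then (1 : ZMod 2) else 0) =
      ∑ i ∈ Finset.range k, (if s i then (1 : ZMod 2) else 0) := by
  induction k with
  | zero => simp [lemT]
  | succ k ih =>
    rw [Finset.sum_range_succ, ← ih]
    show (if xor (lemT s k) (s k) then (1 : ZMod 2) else 0) = _
    cases lemT s k <;> cases s k <;> decide

lemma deBruijn_lemT_period (n : ℕ) (s : ℕ → Bool) (hn : 1 < n)
    (h : isNWindow s n (2 ^ n)) : lemT s (2 ^ n) = false := by
  have hn0 : 0 < n := by omega
  have hinj : ∀ i j, i < 2 ^ n → j < 2 ^ n → tup s n i = tup s n j → i = j := by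
    intro i j hi hj he
    have := h.2 i j he
    unfold Nat.ModEq at this
    rwa [Nat.mod_eq_of_lt hi, Nat.mod_eq_of_lt hj] at this
  have hF : Function.Bijective (fun i : Fin (2 ^ n) => tup s n (i : ℕ)) := by
    rw [Fintype.bijective_iff_injective_and_card]
    refine ⟨fun i j hij => Fin.ext (hinj i j i.isLt j.isLt hij), by simp⟩
  classical
  have h1 : (Finset.univ.filter (fun u : Fin n → Bool => ¬ (u ⟨0, hn0⟩ = true))).card
      = (Finset.univ.filter (fun u : Fin n → Bool => u ⟨0, hn0⟩ = true)).card := by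
    apply Finset.card_bij (fun u _ => fun k => !(u k))
    · intro u hu
      simp only [Finset.mem_filter, Finset.mem_univ, true_and, Bool.not_eq_true] at hu ⊢
      simp [hu]
    · intro u hu v hv he
      funext k
      have := congrFun he k
      simpa using this
    · intro u hu
      refine ⟨fun k => !(u k), ?_, ?_⟩
      · simp only [Finset.mem_filter, Finset.mem_univ, true_and] at hu ⊢
        simp [hu]
      · funext k; simp
  have h2 := Finset.card_filter_add_card_filter_not
    (s := (Finset.univ : Finset (Fin n → Bool))) (p := fun u => u ⟨0, hn0⟩ = true)
  have h3 : (Finset.univ : Finset (Fin n → Bool)).card = 2 ^ n := by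
    simp [Finset.card_univ]
  have hpow : (2 : ℕ) ^ n = 2 * 2 ^ (n - 1) := by
    rw [← pow_succ']
    congr 1
    exact (Nat.succ_pred_eq_of_pos hn0).symm
  rw [h1, h3, hpow, ← two_mul] at h2
  have hCval : (Finset.univ.filter (fun u : Fin n → Bool => u ⟨0, hn0⟩ = true)).card
      = 2 ^ (n - 1) := Nat.eq_of_mul_eq_mul_left (by norm_num) h2
  have hAcard : ((Finset.range (2 ^ n)).filter (fun i => s i = true)).card
      = (Finset.univ.filter (fun u : Fin n → Bool => u ⟨0, hn0⟩ = true)).card := by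
    apply Finset.card_bij (fun i _ => tup s n i)
    · intro i hi
      simp only [Finset.mem_filter, Finset.mem_range] at hi
      simp only [Finset.mem_filter, Finset.mem_univ, true_and, tup]
      simpa using hi.2
    · intro i hi j hj he
      simp only [Finset.mem_filter, Finset.mem_range] at hi hj
      exact hinj i j hi.1 hj.1 he
    · intro u hu
      obtain ⟨i, hi⟩ := hF.2 u
      refine ⟨(i : ℕ), ?_, hi⟩
      simp only [Finset.mem_filter, Finset.mem_univ, true_and] at hu
      simp only [Finset.mem_filter, Finset.mem_range]
      refine ⟨i.isLt, ?_⟩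
      have h0 := congrFun hi ⟨0, hn0⟩
      simp only [tup, Nat.add_zero] at h0
      rw [h0]; exact hu
  have heven : Even (((Finset.range (2 ^ n)).filter (fun i => s i = true)).card) := by
    rw [hAcard, hCval]
    exact (Nat.even_pow).2 ⟨even_two, Nat.sub_ne_zero_of_lt hn⟩
  have hzero : ((((Finset.range (2 ^ n)).filter (fun i => s i = true)).card : ℕ) : ZMod 2)
      = 0 := by
    obtain ⟨d, hd⟩ := heven
    have h2' : (2 : ZMod 2) = 0 := by decide
    rw [hd, Nat.cast_add, ← two_mul, h2', zero_mul]
  have hsum := lemT_sum s (2 ^ n)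
  rw [Finset.sum_boole] at hsum
  rw [hzero] at hsum
  cases hT : lemT s (2 ^ n)
  · rfl
  · rw [hT] at hsum
    simp at hsum

lemma DmapLemT (s : ℕ → Bool) : Dmap (lemT s) = s := by
  funext i
  show xor (lemT s i) (xor (lemT s i) (s i)) = s i
  cases lemT s i <;> cases s i <;> rfl

lemma dinv_val {s u : ℕ → Bool} (hu : Dmap u = s) : ∀ i, u i = xor (u 0) (lemT s i) := by
  intro i
  induction i with
  | zero => simp [lemT]
  | succ i ih =>
    have hsi : s i = xor (u i) (u (i + 1)) := by rw [← hu]; rfl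
    have h1 : u (i + 1) = xor (u i) (s i) := by
      rw [hsi]; cases u i <;> cases u (i + 1) <;> rfl
    rw [h1, ih]
    show xor (xor (u 0) (lemT s i)) (s i) = xor (u 0) (xor (lemT s i) (s i))
    cases u 0 <;> cases lemT s i <;> cases s i <;> rfl

lemma hasPer_congr {u : ℕ → Bool} {m : ℕ} (hp : hasPer u m) {i j : ℕ}
    (hij : i ≡ j [MOD m]) : u i = u j := by
  have key : ∀ k r, u (r + m * k) = u r := by
    intro k
    induction k with
    | zero => simp
    | succ k ih =>
      intro r
      have e : r + m * (k + 1) = r + m * k + m := by ring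
      rw [e, hp (r + m * k), ih]
  have hi := key (i / m) (i % m)
  have hj := key (j / m) (j % m)
  rw [Nat.mod_add_div] at hi hj
  rw [hi, hj]
  exact congrArg u hij

lemma tupD {s u v : ℕ → Bool} (hu : Dmap u = s) (hv : Dmap v = s) {n i j : ℕ}
    (huv : tup u (n + 1) i = tup v (n + 1) j) : tup s n i = tup s n j := by
  funext q
  have h1 := congrFun huv (Fin.castSucc q)
  have h2 := congrFun huv (Fin.succ q)
  simp only [tup, Fin.coe_castSucc, Fin.val_succ] at h1 h2
  show s (i + (q : ℕ)) = s (j + (q : ℕ))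
  conv_lhs => rw [← hu]
  conv_rhs => rw [← hv]
  show xor (u (i + q)) (u (i + q + 1)) = xor (v (j + q)) (v (j + q + 1))
  have e1 : i + (q : ℕ) + 1 = i + ((q : ℕ) + 1) := by ring
  have e2 : j + (q : ℕ) + 1 = j + ((q : ℕ) + 1) := by ring
  rw [h1, e1, e2, h2]

/-- Corollary 1 (Lempel): if `S` is a de Bruijn sequence of order `n > 1` (an
`n`-window sequence of period `2^n`), then `D⁻¹(S)` consists of a disjoint pair
of complementary primitive `(n+1)`-window sequences of period `2^n`. -/
theorem lempel_homo (n : ℕ) (s : ℕ → Bool) (hn : 1 < n)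
    (h : isNWindow s n (2 ^ n)) :
    ∃ t t' : ℕ → Bool, t ≠ t' ∧ Dinv s = {t, t'} ∧ t' = seqCompl t ∧
      disjointSeq t t' (n + 1) ∧ primitiveSeq t (n + 1) ∧ primitiveSeq t' (n + 1) ∧
      isNWindow t (n + 1) (2 ^ n) ∧ isNWindow t' (n + 1) (2 ^ n) := by
  have hn0 : 0 < n := by omega
  have hmpos : 0 < 2 ^ n := Nat.pow_pos (n := n) (by omega)
  have hDt : Dmap (lemT s) = s := DmapLemT s
  have hDt' : Dmap (seqCompl (lemT s)) = s := by
    funext i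
    have hi := congrFun hDt i
    simp only [Dmap, seqCompl] at hi ⊢
    rw [← hi]
    cases lemT s i <;> cases lemT s (i + 1) <;> rfl
  have h0 : lemT s (2 ^ n) = false := deBruijn_lemT_period n s hn h
  have htper : hasPer (lemT s) (2 ^ n) := by
    intro i
    induction i with
    | zero => simpa [lemT] using h0
    | succ i ih =>
      have e : i + 1 + 2 ^ n = (i + 2 ^ n) + 1 := by ring
      rw [e]
      show xor (lemT s (i + 2 ^ n)) (s (i + 2 ^ n)) = xor (lemT s i) (s i)
      rw [ih, h.1.2.1 i]
  have ht'per : hasPer (seqCompl (lemT s)) (2 ^ n) := by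
    intro i; simp only [seqCompl, htper i]
  have hcompl_compl : seqCompl (seqCompl (lemT s)) = lemT s := by
    funext i; simp [seqCompl]
  have hdisj : disjointSeq (lemT s) (seqCompl (lemT s)) (n + 1) := by
    intro i j he
    have hs := tupD hDt hDt' he
    have hmod := h.2 i j hs
    have hti : lemT s i = lemT s j := hasPer_congr htper hmod
    have h0e := congrFun he ⟨0, by omega⟩
    simp only [tup, seqCompl, Nat.add_zero] at h0e
    rw [hti] at h0e
    exact (Bool.not_ne_self (lemT s j)).symm h0e
  have hdisj' : disjointSeq (seqCompl (lemT s)) (lemT s) (n + 1) := by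
    intro i j he
    have hs := tupD hDt' hDt he
    have hmod := h.2 i j hs
    have hti : lemT s i = lemT s j := hasPer_congr htper hmod
    have h0e := congrFun he ⟨0, by omega⟩
    simp only [tup, seqCompl, Nat.add_zero] at h0e
    rw [hti] at h0e
    exact (Bool.not_ne_self (lemT s j)) h0e
  have hwin : ∀ u : ℕ → Bool, Dmap u = s →
      (∀ i j, tup u (n + 1) i = tup u (n + 1) j → i ≡ j [MOD 2 ^ n]) := by
    intro u hu i j he
    exact h.2 i j (tupD hu hu he)
  have hmin : ∀ u : ℕ → Bool, Dmap u = s →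
      ∀ k, 0 < k → hasPer u k → 2 ^ n ≤ k := by
    intro u hu k hk hkper
    apply h.1.2.2 k hk
    intro i
    rw [← hu]
    simp only [Dmap]
    have e : i + k + 1 = (i + 1) + k := by ring
    rw [e, hkper i, hkper (i + 1)]
  refine ⟨lemT s, seqCompl (lemT s), ?_, ?_, rfl, hdisj, hdisj, ?_,
    ⟨⟨hmpos, htper, hmin (lemT s) hDt⟩, hwin (lemT s) hDt⟩,
    ⟨⟨hmpos, ht'per, hmin (seqCompl (lemT s)) hDt'⟩, hwin (seqCompl (lemT s)) hDt'⟩⟩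
  · intro hc
    have := congrFun hc 0
    simp [seqCompl] at this
  · ext u
    simp only [Dinv, Set.mem_setOf_eq, Set.mem_insert_iff, Set.mem_singleton_iff]
    constructor
    · intro hu
      have hc := dinv_val hu
      cases h0u : u 0
      · left
        funext i
        rw [hc i, h0u, Bool.false_xor]
      · right
        funext i
        rw [hc i, h0u, Bool.true_xor]
        rfl
    · rintro (rfl | rfl)
      · exact hDt
      · exact hDt'
  · show disjointSeq (seqCompl (lemT s)) (seqCompl (seqCompl (lemT s))) (n + 1)
    rw [hcompl_compl]
    exact hdisj'
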